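/- arXiv:2211.14549 — 2 statements merged into one kernel-verified Lean document; each statement's English description precedes it below -/
import Mathlib

section
/- For all nonnegative integers m and k, B_m^{(-k)} = B_k^{(-m)} (duality of poly-Bernoulli numbers with negative upper index). -/
/-- Stirling numbers of the second kind. -/
def S2 : ℕ → ℕ → ℕ
  | 0, 0 => 1
  | 0, _ + 1 => 0
  | _ + 1, 0 => 0
  | n + 1, m + 1 => S2 n m + (m + 1) * S2 n (m + 1)
/-- Poly-Bernoulli number with negative upper index: `B_n^{(-k)}`. -/
def Bneg (n k : ℕ) : ℤ :=
  (-1 : ℤ) ^ n * ∑ m ∈ Finset.range (n + 1),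
    (-1 : ℤ) ^ m * (Nat.factorial m : ℤ) * (S2 n m : ℤ) * ((m : ℤ) + 1) ^ k

open Finset

/-- Falling-factorial-like product. -/
def ff (x : ℤ) : ℕ → ℤ
  | 0 => 1
  | j + 1 => ff x j * (x - j)

lemma S2_zero_lt : ∀ n m : ℕ, S2 n (n + m + 1) = 0 := by
  intro n
  induction n with
  | zero => intro m; rfl
  | succ n ih =>
    intro m
    have h : n + 1 + m + 1 = (n + m + 1) + 1 := by ring
    rw [h]
    show S2 n (n + m + 1) + ((n + m + 1) + 1) * S2 n ((n + m + 1) + 1) = 0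
    have h2 : (n + m + 1) + 1 = n + (m+1) + 1 := by ring
    rw [ih m, h2, ih (m+1)]
    simp

lemma S2_eq_zero {n m : ℕ} (h : n < m) : S2 n m = 0 := by
  obtain ⟨d, rfl⟩ := Nat.exists_eq_add_of_lt h
  exact S2_zero_lt n d

lemma ff_zero_pos : ∀ j, ff 0 (j + 1) = 0 := by
  intro j
  induction j with
  | zero => show ff 0 0 * (0 - 0) = 0; simp [ff]
  | succ j ih => show ff 0 (j+1) * _ = 0; rw [ih]; ring

lemma ff_succ_left : ∀ (j : ℕ) (x : ℤ), ff (x + 1) (j + 1) = (x + 1) * ff x j := by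
  intro j
  induction j with
  | zero => intro x; show ff (x+1) 0 * (x + 1 - 0) = _; simp [ff]
  | succ j ih =>
    intro x
    show ff (x+1) (j+1) * (x + 1 - (j+1 : ℕ)) = (x+1) * (ff x j * (x - (j:ℕ)))
    rw [ih]; push_cast; ring

/-- Expansion of (x+1)^k in the ff basis. -/
lemma pow_eq_sum_ff (k : ℕ) (x : ℤ) :
    (x + 1) ^ k = ∑ j ∈ range (k + 1), (S2 (k+1) (j+1) : ℤ) * ff x j := by
  induction k with
  | zero =>
    simp [ff]
    show (1:ℤ) = ((S2 0 0 + 1 * S2 0 1 : ℕ) : ℤ)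
    rfl
  | succ k ih =>
    have step : ∀ j : ℕ, (x + 1) * ff x j = ff x (j+1) + ((j:ℤ)+1) * ff x j := by
      intro j
      show _ = ff x j * (x - j) + _
      ring
    calc (x + 1) ^ (k+1) = (x+1) * ∑ j ∈ range (k + 1), (S2 (k+1) (j+1) : ℤ) * ff x j := by
          rw [pow_succ, ih]; ring
      _ = ∑ j ∈ range (k + 1), (S2 (k+1) (j+1) : ℤ) * (ff x (j+1) + ((j:ℤ)+1) * ff x j) := by
          rw [Finset.mul_sum]
          refine Finset.sum_congr rfl fun j _ => ?_
          rw [← step j]; ring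
      _ = (∑ j ∈ range (k + 1), (S2 (k+1) (j+1) : ℤ) * ff x (j+1))
          + ∑ j ∈ range (k + 1), ((j:ℤ)+1) * (S2 (k+1) (j+1) : ℤ) * ff x j := by
          rw [← Finset.sum_add_distrib]
          refine Finset.sum_congr rfl fun j _ => ?_
          ring
      _ = (∑ j ∈ range (k + 2), (S2 (k+1) j : ℤ) * ff x j)
          + ∑ j ∈ range (k + 2), ((j:ℤ)+1) * (S2 (k+1) (j+1) : ℤ) * ff x j := by
          congr 1
          · rw [Finset.sum_range_succ' (fun j => (S2 (k+1) j : ℤ) * ff x j) (k+1)]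
            simp [ff]
            rfl
          · rw [Finset.sum_range_succ (fun j => ((j:ℤ)+1) * (S2 (k+1) (j+1) : ℤ) * ff x j) (k+1)]
            have : (S2 (k+1) (k+2) : ℤ) = 0 := by
              rw [S2_eq_zero (by omega)]; rfl
            rw [this]; ring
      _ = ∑ j ∈ range (k + 2), (S2 (k+2) (j+1) : ℤ) * ff x j := by
          rw [← Finset.sum_add_distrib]
          refine Finset.sum_congr rfl fun j _ => ?_
          show _ = ((S2 (k+1) j + (j+1) * S2 (k+1) (j+1) : ℕ) : ℤ) * ff x j
          push_cast; ring

lemma S2_succ_succ (n m : ℕ) : S2 (n+1) (m+1) = S2 n m + (m+1) * S2 n (m+1) := rfl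

def F (n j : ℕ) : ℤ :=
  ∑ m ∈ range (n+1), (-1:ℤ)^m * (Nat.factorial m : ℤ) * (S2 n m : ℤ) * ff m j

lemma F_split (n j : ℕ) :
    F (n+1) j = ∑ m ∈ range (n+1),
      ((-1:ℤ)^(m+1) * (Nat.factorial (m+1) : ℤ) * (S2 n m : ℤ) * ff ((m:ℤ)+1) j
        + (-1:ℤ)^m * (Nat.factorial m : ℤ) * (m:ℤ) * (S2 n m : ℤ) * ff m j) := by
  unfold F
  rw [Finset.sum_range_succ'
    (fun m => (-1:ℤ)^m * (Nat.factorial m : ℤ) * (S2 (n+1) m : ℤ) * ff m j) (n+1)]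
  have h0 : ((-1:ℤ)^0 * (Nat.factorial 0 : ℤ) * (S2 (n+1) 0 : ℤ) * ff ((0:ℕ):ℤ) j) = 0 := by
    show _ * ((0:ℕ):ℤ) * _ = 0
    push_cast; ring
  rw [h0, add_zero]
  have hshift : (∑ m ∈ range (n+1),
      (-1:ℤ)^(m+1) * (Nat.factorial (m+1) : ℤ) * ((m:ℤ)+1) * (S2 n (m+1) : ℤ) * ff ((m:ℤ)+1) j)
      = ∑ m ∈ range (n+1), (-1:ℤ)^m * (Nat.factorial m : ℤ) * (m:ℤ) * (S2 n m : ℤ) * ff m j := by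
    have := Finset.sum_range_succ'
      (fun m => (-1:ℤ)^m * (Nat.factorial m : ℤ) * (m:ℤ) * (S2 n m : ℤ) * ff m j) (n+1)
    have h00 : ((-1:ℤ)^0 * (Nat.factorial 0 : ℤ) * ((0:ℕ):ℤ) * (S2 n 0 : ℤ) * ff ((0:ℕ):ℤ) j) = 0 := by
      push_cast; ring
    have htop : ((-1:ℤ)^(n+1) * (Nat.factorial (n+1) : ℤ) * ((n+1:ℕ):ℤ) * (S2 n (n+1) : ℤ)
        * ff ((n+1:ℕ):ℤ) j) = 0 := by
      rw [S2_eq_zero (Nat.lt_succ_self n)]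
      push_cast; ring
    calc (∑ m ∈ range (n+1),
        (-1:ℤ)^(m+1) * (Nat.factorial (m+1) : ℤ) * ((m:ℤ)+1) * (S2 n (m+1) : ℤ) * ff ((m:ℤ)+1) j)
        = ∑ m ∈ range (n+1),
          (-1:ℤ)^(m+1) * (Nat.factorial (m+1) : ℤ) * ((m+1:ℕ):ℤ) * (S2 n (m+1) : ℤ) * ff ((m+1:ℕ):ℤ) j := by
          refine Finset.sum_congr rfl fun m _ => ?_; push_cast; ring
      _ = ∑ m ∈ range (n+2), (-1:ℤ)^m * (Nat.factorial m : ℤ) * (m:ℤ) * (S2 n m : ℤ) * ff m j := by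
          rw [Finset.sum_range_succ'
            (fun m => (-1:ℤ)^m * (Nat.factorial m : ℤ) * (m:ℤ) * (S2 n m : ℤ) * ff m j) (n+1)]
          rw [h00, add_zero]
      _ = _ := by
          rw [Finset.sum_range_succ
            (fun m => (-1:ℤ)^m * (Nat.factorial m : ℤ) * (m:ℤ) * (S2 n m : ℤ) * ff m j) (n+1)]
          rw [htop, add_zero]
  rw [Finset.sum_add_distrib, ← hshift, ← Finset.sum_add_distrib]
  refine Finset.sum_congr rfl fun m _ => ?_
  rw [S2_succ_succ]
  push_cast
  ring

lemma F_succ_zero (n : ℕ) : F (n+1) 0 = - F n 0 := by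
  rw [F_split]
  unfold F
  rw [← Finset.sum_neg_distrib]
  refine Finset.sum_congr rfl fun m _ => ?_
  have h1 : ff ((m:ℤ)+1) 0 = 1 := rfl
  have h2 : ff (m:ℤ) 0 = 1 := rfl
  rw [h1, h2, Nat.factorial_succ]
  push_cast
  ring

lemma F_succ_succ (n j : ℕ) :
    F (n+1) (j+1) = -(((j:ℤ)+2) * F n (j+1) + ((j:ℤ)+1)^2 * F n j) := by
  rw [F_split]
  unfold F
  rw [Finset.mul_sum, Finset.mul_sum, ← Finset.sum_add_distrib, ← Finset.sum_neg_distrib]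
  refine Finset.sum_congr rfl fun m _ => ?_
  have h1 : ff ((m:ℤ)+1) (j+1) = ((m:ℤ)+1) * ff m j := ff_succ_left j (m:ℤ)
  have h2 : ff (m:ℤ) (j+1) = ff m j * ((m:ℤ) - j) := rfl
  rw [h1, h2, Nat.factorial_succ]
  push_cast
  ring

lemma F_eq : ∀ (n : ℕ) (j : ℕ),
    (-1:ℤ)^n * F n j = (Nat.factorial j : ℤ)^2 * (S2 (n+1) (j+1) : ℤ) := by
  intro n
  induction n with
  | zero =>
    intro j
    have hF : F 0 j = ff ((0:ℕ):ℤ) j := by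
      unfold F
      rw [Finset.sum_range_one]
      show (1:ℤ) * 1 * ((1:ℕ):ℤ) * ff ((0:ℕ):ℤ) j = _
      push_cast; ring
    cases j with
    | zero =>
      rw [hF]
      show (1:ℤ) * 1 = 1^2 * ((S2 0 0 + 1 * S2 0 1 : ℕ) : ℤ)
      rfl
    | succ j =>
      rw [hF]
      have : ff ((0:ℕ):ℤ) (j+1) = 0 := by rw [Nat.cast_zero]; exact ff_zero_pos j
      rw [this]
      have : S2 1 (j+2) = 0 := S2_eq_zero (by omega)
      rw [this]
      push_cast; ring
  | succ n ih =>
    intro j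
    cases j with
    | zero =>
      rw [F_succ_zero]
      have h1 : S2 (n+2) 1 = S2 (n+1) 1 := by
        rw [S2_succ_succ]
        have : S2 (n+1) 0 = 0 := rfl
        rw [this]; ring
      rw [h1]
      have := ih 0
      rw [pow_succ]
      linear_combination this
    | succ j =>
      rw [F_succ_succ]
      rw [show S2 (n+2) (j+2) = S2 (n+1) (j+1) + (j+2) * S2 (n+1) (j+2) from rfl]
      have i1 := ih (j+1)
      have i2 := ih j
      rw [Nat.factorial_succ] at i1 ⊢
      push_cast at i1 i2 ⊢
      rw [pow_succ]
      linear_combination ((j:ℤ)+2) * i1 + ((j:ℤ)+1)^2 * i2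

lemma Bneg_eq (n k : ℕ) : Bneg n k
    = ∑ j ∈ range (k+1), (Nat.factorial j : ℤ)^2 * (S2 (n+1) (j+1) : ℤ) * (S2 (k+1) (j+1) : ℤ) := by
  unfold Bneg
  have h1 : (∑ m ∈ Finset.range (n+1),
      (-1:ℤ)^m * (Nat.factorial m : ℤ) * (S2 n m : ℤ) * ((m:ℤ)+1)^k)
      = ∑ m ∈ range (n+1), ∑ j ∈ range (k+1),
        (S2 (k+1) (j+1) : ℤ) * ((-1:ℤ)^m * (Nat.factorial m : ℤ) * (S2 n m : ℤ) * ff m j) := by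
    refine Finset.sum_congr rfl fun m _ => ?_
    rw [pow_eq_sum_ff k (m:ℤ), Finset.mul_sum]
    refine Finset.sum_congr rfl fun j _ => ?_
    ring
  rw [h1, Finset.sum_comm, Finset.mul_sum]
  refine Finset.sum_congr rfl fun j _ => ?_
  rw [← Finset.mul_sum]
  have := F_eq n j
  unfold F at this
  linear_combination (S2 (k+1) (j+1) : ℤ) * this

/-- Duality of poly-Bernoulli numbers with negative upper index. -/
theorem polyBernoulli_duality (m k : ℕ) : Bneg m k = Bneg k m := by
  rw [Bneg_eq, Bneg_eq]
  have ext1 : ∀ a b : ℕ, (∑ j ∈ range (b+1),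
      (Nat.factorial j : ℤ)^2 * (S2 (a+1) (j+1) : ℤ) * (S2 (b+1) (j+1) : ℤ))
      = ∑ j ∈ range (a+b+1),
      (Nat.factorial j : ℤ)^2 * (S2 (a+1) (j+1) : ℤ) * (S2 (b+1) (j+1) : ℤ) := by
    intro a b
    refine Finset.sum_subset (Finset.range_subset_range.2 (by omega)) ?_
    intro j hj hj2
    have hz : S2 (b+1) (j+1) = 0 := by
      refine S2_eq_zero ?_
      simp only [Finset.mem_range] at hj hj2
      omega
    rw [hz]
    push_cast; ring
  rw [ext1 m k, ext1 k m, show k + m = m + k from Nat.add_comm k m]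
  refine Finset.sum_congr rfl fun j _ => ?_
  ring
end

section
/- Let k1, k2, N be positive integers, p a prime, n2 > 1 odd, and n1, n2, m1 >= N with n1 ≡ m1 (mod p^{N-1}(p-1)). Then B^{★,(-k1,-k2)}_{n1, n2-1} ≡ B^{(-k1,-k2)}_{m1, n2-1} (mod p^N). -/
/-- Double-indexed poly-Bernoulli number with negative upper indices
`B_{ℓ1,ℓ2}^{(-k1,-k2)}`, via the explicit formula of Theorem 2.1. -/
def B2negA (l1 l2 k1 k2 : ℕ) : ℤ :=
  ∑ m1 ∈ Finset.range (l1 + l2 + 1), ∑ m2 ∈ Finset.range (l1 + l2 + 1),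
    (-1 : ℤ) ^ (m1 + m2 + l1 + l2) * (Nat.factorial m1 : ℤ) * (Nat.factorial m2 : ℤ) *
      ((m1 : ℤ) + 1) ^ k1 * ((m1 : ℤ) + (m2 : ℤ) + 2) ^ k2 *
      ∑ n ∈ Finset.range (l1 + l2 + 1),
        (S2 n m1 : ℤ) * (S2 (l1 + l2 - n) m2 : ℤ) *
          (if l1 ≤ n then (Nat.choose l2 (n - l1) : ℤ) else 0)


open Finset

lemma S2_eq_zero_of_lt : ∀ {n m : ℕ}, n < m → S2 n m = 0 := by
  intro n
  induction n with
  | zero =>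
    intro m h
    cases m with
    | zero => omega
    | succ m => rfl
  | succ n ih =>
    intro m h
    cases m with
    | zero => omega
    | succ m =>
      have h1 : n < m := by omega
      simp [S2, ih h1, ih (show n < m + 1 by omega)]

def Fj (a n : ℕ) : ℤ := ∑ j ∈ Finset.range (a + 1), (-1 : ℤ) ^ (a + j) * (a.choose j : ℤ) * (j : ℤ) ^ n

lemma Fj_succ_zero (a : ℕ) : Fj (a + 1) 0 = 0 := by
  have h : Fj (a + 1) 0 = (-1 : ℤ) ^ (a + 1) *
      ∑ j ∈ Finset.range (a + 2), (-1 : ℤ) ^ j * ((a + 1).choose j : ℤ) := by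
    rw [Fj, Finset.mul_sum]
    refine Finset.sum_congr rfl fun j hj => ?_
    rw [pow_add]; ring
  rw [h, Int.alternating_sum_range_choose_of_ne (Nat.succ_ne_zero a), mul_zero]

lemma Fj_G (a n : ℕ) : Fj (a + 1) n =
    (∑ j ∈ Finset.range (a + 1), (-1 : ℤ) ^ (a + j) * (a.choose j : ℤ) * ((j : ℤ) + 1) ^ n)
      - Fj a n := by
  set G := ∑ j ∈ Finset.range (a + 1), (-1 : ℤ) ^ (a + j) * (a.choose j : ℤ) * ((j : ℤ) + 1) ^ n
    with hG
  set N1 := ∑ j ∈ Finset.range (a + 1),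
      (-1 : ℤ) ^ (a + j) * (a.choose (j + 1) : ℤ) * ((j : ℤ) + 1) ^ n with hN1
  have hsplit : Fj (a + 1) n = G + N1 + (-1 : ℤ) ^ (a + 1) * (0 : ℤ) ^ n := by
    rw [Fj, Finset.sum_range_succ']
    have hterm : ∀ j ∈ Finset.range (a + 1),
        (-1 : ℤ) ^ (a + 1 + (j + 1)) * ((a + 1).choose (j + 1) : ℤ) * ((j + 1 : ℕ) : ℤ) ^ n
        = (-1 : ℤ) ^ (a + j) * (a.choose j : ℤ) * ((j : ℤ) + 1) ^ n
          + (-1 : ℤ) ^ (a + j) * (a.choose (j + 1) : ℤ) * ((j : ℤ) + 1) ^ n := by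
      intro j hj
      rw [Nat.choose_succ_succ]
      have he : a + 1 + (j + 1) = (a + j) + 2 := by omega
      rw [he, pow_add]
      push_cast
      ring
    rw [Finset.sum_congr rfl hterm, Finset.sum_add_distrib]
    simp [hG, hN1]
  have hrange : N1 = ∑ j ∈ Finset.range a,
      (-1 : ℤ) ^ (a + j) * (a.choose (j + 1) : ℤ) * ((j : ℤ) + 1) ^ n := by
    rw [hN1, Finset.sum_range_succ, Nat.choose_succ_self]
    push_cast
    ring
  have hFa : Fj a n = -N1 + (-1 : ℤ) ^ a * (0 : ℤ) ^ n := by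
    rw [Fj, Finset.sum_range_succ', hrange]
    have hneg : ∑ j ∈ Finset.range a,
        (-1 : ℤ) ^ (a + (j + 1)) * (a.choose (j + 1) : ℤ) * ((j + 1 : ℕ) : ℤ) ^ n
        = -(∑ j ∈ Finset.range a,
            (-1 : ℤ) ^ (a + j) * (a.choose (j + 1) : ℤ) * ((j : ℤ) + 1) ^ n) := by
      rw [← Finset.sum_neg_distrib]
      refine Finset.sum_congr rfl fun j _ => ?_
      rw [show a + (j + 1) = (a + j) + 1 from rfl, pow_succ]
      push_cast
      ring
    rw [hneg]
    simp [Nat.choose_zero_right]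
  have hsgn : (-1 : ℤ) ^ (a + 1) = -(-1 : ℤ) ^ a := by rw [pow_succ]; ring
  rw [hsplit, hFa, hsgn]
  ring

lemma Fj_rec (a n : ℕ) : Fj (a + 1) (n + 1) = ((a : ℤ) + 1) * (Fj a n + Fj (a + 1) n) := by
  have hL : Fj (a + 1) (n + 1) = ((a : ℤ) + 1) *
      ∑ j ∈ Finset.range (a + 1), (-1 : ℤ) ^ (a + j) * (a.choose j : ℤ) * ((j : ℤ) + 1) ^ n := by
    rw [Fj, Finset.sum_range_succ', Finset.mul_sum]
    have hterm : ∀ j ∈ Finset.range (a + 1),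
        (-1 : ℤ) ^ (a + 1 + (j + 1)) * ((a + 1).choose (j + 1) : ℤ) * ((j + 1 : ℕ) : ℤ) ^ (n + 1)
        = ((a : ℤ) + 1) * ((-1 : ℤ) ^ (a + j) * (a.choose j : ℤ) * ((j : ℤ) + 1) ^ n) := by
      intro j hj
      have hch : ((a + 1) * a.choose j : ℤ) = (((a + 1).choose (j + 1) : ℕ) : ℤ) * ((j : ℤ) + 1) := by
        have := Nat.add_one_mul_choose_eq a j
        have h2 : (a + 1) * a.choose j = (a + 1).choose (j + 1) * (j + 1) := this
        exact_mod_cast congrArg (Nat.cast : ℕ → ℤ) h2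
      have he : a + 1 + (j + 1) = (a + j) + 2 := by omega
      rw [he, pow_add]
      push_cast
      push_cast at hch
      rw [pow_succ]
      linear_combination (-(-1 : ℤ) ^ (a + j) * ((j : ℤ) + 1) ^ n) * hch
    rw [Finset.sum_congr rfl hterm]
    simp
  rw [hL, Fj_G a n]
  ring

lemma fact_S2 : ∀ n a : ℕ, (a.factorial : ℤ) * (S2 n a : ℤ) = Fj a n := by
  intro n
  induction n with
  | zero =>
    intro a
    cases a with
    | zero => simp [S2, Fj]
    | succ a => simp [S2, Fj_succ_zero]
  | succ n ih =>
    intro a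
    cases a with
    | zero => simp [S2, Fj]
    | succ a =>
      have e : S2 (n + 1) (a + 1) = S2 n a + (a + 1) * S2 n (a + 1) := rfl
      have h1 := ih a
      have h2 := ih (a + 1)
      rw [e, Fj_rec, ← h1, ← h2, Nat.factorial_succ]
      push_cast
      ring

lemma zmod_unit_pow {p N : ℕ} (hp : p.Prime) (hN : 0 < N) {n1 m1 : ℕ}
    (h : n1 ≡ m1 [MOD p ^ (N - 1) * (p - 1)]) (x : ZMod (p ^ N)) (hx : IsUnit x) :
    x ^ n1 = x ^ m1 := by
  obtain ⟨u, rfl⟩ := hx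
  have hT : (u : ZMod (p ^ N)) ^ Nat.totient (p ^ N) = 1 := by
    rw [← Units.val_pow_eq_pow_val, ZMod.pow_totient, Units.val_one]
  have h' : n1 % Nat.totient (p ^ N) = m1 % Nat.totient (p ^ N) := by
    rw [Nat.totient_prime_pow hp hN]; exact h
  rw [pow_eq_pow_mod n1 hT, pow_eq_pow_mod m1 hT, h']

lemma zmod_pow_nat {p N : ℕ} (hp : p.Prime) (hN : 0 < N) {n1 m1 : ℕ}
    (hn1 : N ≤ n1) (hm1 : N ≤ m1)
    (h : n1 ≡ m1 [MOD p ^ (N - 1) * (p - 1)]) (j : ℕ) :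
    (j : ZMod (p ^ N)) ^ n1 = (j : ZMod (p ^ N)) ^ m1 := by
  haveI : NeZero (p ^ N) := ⟨pow_ne_zero N hp.pos.ne'⟩
  by_cases hd : p ∣ j
  · have key : ∀ k, N ≤ k → (j : ZMod (p ^ N)) ^ k = 0 := by
      intro k hk
      have hdvd : p ^ N ∣ j ^ k :=
        dvd_trans (pow_dvd_pow p hk) (pow_dvd_pow_of_dvd hd k)
      have : ((j ^ k : ℕ) : ZMod (p ^ N)) = 0 :=
        (ZMod.natCast_eq_zero_iff _ _).mpr hdvd
      rwa [Nat.cast_pow] at this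
    rw [key n1 hn1, key m1 hm1]
  · apply zmod_unit_pow hp hN h
    rw [ZMod.isUnit_iff_coprime]
    exact Nat.Coprime.pow_right N ((Nat.Prime.coprime_iff_not_dvd hp).mpr hd).symm

lemma zmod_neg_one_pow {p N : ℕ} (hp : p.Prime) (hN : 0 < N) {n1 m1 : ℕ}
    (h : n1 ≡ m1 [MOD p ^ (N - 1) * (p - 1)]) :
    (-1 : ZMod (p ^ N)) ^ n1 = (-1 : ZMod (p ^ N)) ^ m1 :=
  zmod_unit_pow hp hN h _ isUnit_one.neg

def C2sum (l1 l2 k1 k2 M : ℕ) : ℤ :=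
  ∑ a ∈ Finset.range (M + 1), ∑ b ∈ Finset.range (M + 1), ∑ t ∈ Finset.range (l2 + 1),
    ∑ j ∈ Finset.range (a + 1),
      (-1 : ℤ) ^ (a + b + l2) * (Nat.factorial b : ℤ) * ((a : ℤ) + 1) ^ k1 *
        ((a : ℤ) + (b : ℤ) + 2) ^ k2 * (S2 (l2 - t) b : ℤ) * (l2.choose t : ℤ) *
        ((-1 : ℤ) ^ (a + j) * (a.choose j : ℤ) * (j : ℤ) ^ t) *
        ((-1 : ℤ) ^ l1 * (j : ℤ) ^ l1)

lemma B_eq_C2 (l1 l2 k1 k2 M : ℕ) (hM : l1 + l2 ≤ M) :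
    B2negA l1 l2 k1 k2 = C2sum l1 l2 k1 k2 M := by
  -- Step 1: rewrite the inner `n`-sum as a `t`-sum
  have inner : ∀ a b : ℕ,
      (∑ n ∈ Finset.range (l1 + l2 + 1),
        (S2 n a : ℤ) * (S2 (l1 + l2 - n) b : ℤ) *
          (if l1 ≤ n then (Nat.choose l2 (n - l1) : ℤ) else 0))
      = ∑ t ∈ Finset.range (l2 + 1),
          (S2 (l1 + t) a : ℤ) * (S2 (l2 - t) b : ℤ) * (l2.choose t : ℤ) := by
    intro a b
    rw [← Finset.sum_range_add_sum_Ico _ (show l1 ≤ l1 + l2 + 1 by omega)]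
    have h0 : (∑ n ∈ Finset.range l1,
        (S2 n a : ℤ) * (S2 (l1 + l2 - n) b : ℤ) *
          (if l1 ≤ n then (Nat.choose l2 (n - l1) : ℤ) else 0)) = 0 := by
      refine Finset.sum_eq_zero fun n hn => ?_
      have hn' : ¬ l1 ≤ n := by have := Finset.mem_range.mp hn; omega
      rw [if_neg hn', mul_zero]
    rw [h0, zero_add, Finset.sum_Ico_eq_sum_range,
      show l1 + l2 + 1 - l1 = l2 + 1 by omega]
    refine Finset.sum_congr rfl fun t ht => ?_
    rw [if_pos (Nat.le_add_right l1 t),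
      show l1 + l2 - (l1 + t) = l2 - t by omega, show l1 + t - l1 = t by omega]
  -- Step 2: B2negA as a double sum of T over the small range
  have hB : B2negA l1 l2 k1 k2 =
      ∑ a ∈ Finset.range (l1 + l2 + 1), ∑ b ∈ Finset.range (l1 + l2 + 1),
        (-1 : ℤ) ^ (a + b + l1 + l2) * (Nat.factorial a : ℤ) * (Nat.factorial b : ℤ) *
          ((a : ℤ) + 1) ^ k1 * ((a : ℤ) + (b : ℤ) + 2) ^ k2 *
          ∑ t ∈ Finset.range (l2 + 1),
            (S2 (l1 + t) a : ℤ) * (S2 (l2 - t) b : ℤ) * (l2.choose t : ℤ) := by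
    refine Finset.sum_congr rfl fun a _ => Finset.sum_congr rfl fun b _ => ?_
    rw [inner a b]
  rw [hB]
  -- Step 3: extend the ranges to M + 1
  have hzero_b : ∀ a b : ℕ, l1 + l2 < b →
      (∑ t ∈ Finset.range (l2 + 1),
        (S2 (l1 + t) a : ℤ) * (S2 (l2 - t) b : ℤ) * (l2.choose t : ℤ)) = 0 := by
    intro a b hb
    refine Finset.sum_eq_zero fun t _ => ?_
    rw [S2_eq_zero_of_lt (show l2 - t < b by omega)]
    push_cast
    ring
  have hzero_a : ∀ a b : ℕ, l1 + l2 < a →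
      (∑ t ∈ Finset.range (l2 + 1),
        (S2 (l1 + t) a : ℤ) * (S2 (l2 - t) b : ℤ) * (l2.choose t : ℤ)) = 0 := by
    intro a b ha
    refine Finset.sum_eq_zero fun t ht => ?_
    have ht' : t ≤ l2 := by have := Finset.mem_range.mp ht; omega
    rw [S2_eq_zero_of_lt (show l1 + t < a by omega)]
    push_cast
    ring
  have hsub : Finset.range (l1 + l2 + 1) ⊆ Finset.range (M + 1) :=
    Finset.range_subset_range.mpr (by omega)
  have hbrow : ∀ a : ℕ,
      (∑ b ∈ Finset.range (l1 + l2 + 1),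
        (-1 : ℤ) ^ (a + b + l1 + l2) * (Nat.factorial a : ℤ) * (Nat.factorial b : ℤ) *
          ((a : ℤ) + 1) ^ k1 * ((a : ℤ) + (b : ℤ) + 2) ^ k2 *
          ∑ t ∈ Finset.range (l2 + 1),
            (S2 (l1 + t) a : ℤ) * (S2 (l2 - t) b : ℤ) * (l2.choose t : ℤ))
      = ∑ b ∈ Finset.range (M + 1),
        (-1 : ℤ) ^ (a + b + l1 + l2) * (Nat.factorial a : ℤ) * (Nat.factorial b : ℤ) *
          ((a : ℤ) + 1) ^ k1 * ((a : ℤ) + (b : ℤ) + 2) ^ k2 *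
          ∑ t ∈ Finset.range (l2 + 1),
            (S2 (l1 + t) a : ℤ) * (S2 (l2 - t) b : ℤ) * (l2.choose t : ℤ) := by
    intro a
    refine Finset.sum_subset hsub fun b _ hb => ?_
    have hb' : l1 + l2 < b := by
      by_contra hc
      exact hb (Finset.mem_range.mpr (by omega))
    rw [hzero_b a b hb', mul_zero]
  rw [Finset.sum_congr rfl fun a _ => hbrow a]
  have hext : (∑ a ∈ Finset.range (l1 + l2 + 1), ∑ b ∈ Finset.range (M + 1),
      (-1 : ℤ) ^ (a + b + l1 + l2) * (Nat.factorial a : ℤ) * (Nat.factorial b : ℤ) *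
        ((a : ℤ) + 1) ^ k1 * ((a : ℤ) + (b : ℤ) + 2) ^ k2 *
        ∑ t ∈ Finset.range (l2 + 1),
          (S2 (l1 + t) a : ℤ) * (S2 (l2 - t) b : ℤ) * (l2.choose t : ℤ))
      = ∑ a ∈ Finset.range (M + 1), ∑ b ∈ Finset.range (M + 1),
      (-1 : ℤ) ^ (a + b + l1 + l2) * (Nat.factorial a : ℤ) * (Nat.factorial b : ℤ) *
        ((a : ℤ) + 1) ^ k1 * ((a : ℤ) + (b : ℤ) + 2) ^ k2 *
        ∑ t ∈ Finset.range (l2 + 1),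
          (S2 (l1 + t) a : ℤ) * (S2 (l2 - t) b : ℤ) * (l2.choose t : ℤ) := by
    refine Finset.sum_subset hsub fun a _ ha => ?_
    have ha' : l1 + l2 < a := by
      by_contra hc
      exact ha (Finset.mem_range.mpr (by omega))
    refine Finset.sum_eq_zero fun b _ => ?_
    rw [hzero_a a b ha', mul_zero]
  rw [hext, C2sum]
  -- Step 4: expand each term via fact_S2
  refine Finset.sum_congr rfl fun a _ => Finset.sum_congr rfl fun b _ => ?_
  rw [Finset.mul_sum]
  refine Finset.sum_congr rfl fun t _ => ?_
  have hpull : (-1 : ℤ) ^ (a + b + l1 + l2) * (Nat.factorial a : ℤ) * (Nat.factorial b : ℤ) *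
      ((a : ℤ) + 1) ^ k1 * ((a : ℤ) + (b : ℤ) + 2) ^ k2 *
      ((S2 (l1 + t) a : ℤ) * (S2 (l2 - t) b : ℤ) * (l2.choose t : ℤ))
      = (-1 : ℤ) ^ (a + b + l1 + l2) * (Nat.factorial b : ℤ) *
        ((a : ℤ) + 1) ^ k1 * ((a : ℤ) + (b : ℤ) + 2) ^ k2 *
        ((S2 (l2 - t) b : ℤ) * (l2.choose t : ℤ)) *
        ((Nat.factorial a : ℤ) * (S2 (l1 + t) a : ℤ)) := by ring
  rw [hpull, fact_S2, Fj, Finset.mul_sum]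
  refine Finset.sum_congr rfl fun j _ => ?_
  rw [show a + b + l1 + l2 = (a + b + l2) + l1 by omega, pow_add, pow_add]
  ring

lemma C2_cast {p N : ℕ} (hp : p.Prime) (hN : 0 < N) {n1 m1 : ℕ}
    (hn1 : N ≤ n1) (hm1 : N ≤ m1)
    (h : n1 ≡ m1 [MOD p ^ (N - 1) * (p - 1)]) (l2 k1 k2 M : ℕ) :
    ((C2sum n1 l2 k1 k2 M : ℤ) : ZMod (p ^ N)) = ((C2sum m1 l2 k1 k2 M : ℤ) : ZMod (p ^ N)) := by
  simp only [C2sum]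
  push_cast
  refine Finset.sum_congr rfl fun a _ => Finset.sum_congr rfl fun b _ =>
    Finset.sum_congr rfl fun t _ => Finset.sum_congr rfl fun j _ => ?_
  rw [zmod_neg_one_pow hp hN h, zmod_pow_nat hp hN hn1 hm1 h j]


/-- Periodicity for the star double-indexed poly-Bernoulli numbers with odd
second index. -/
theorem starDoublePolyBernoulli_periodicity (k1 k2 N : ℕ)
    (hk1 : 0 < k1) (hk2 : 0 < k2) (hN : 0 < N) (p : ℕ) (hp : p.Prime)
    (Bstar : ℕ → ℕ → ℤ)
    (hBstar : ∀ a b : ℕ, Odd b → 1 < b → Bstar a (b - 1) = B2negA a (b - 1) k1 k2)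
    (n1 n2 m1 : ℕ) (hodd : Odd n2) (hn2' : 1 < n2)
    (hn1 : N ≤ n1) (hn2 : N ≤ n2) (hm1 : N ≤ m1)
    (h : n1 ≡ m1 [MOD p ^ (N - 1) * (p - 1)]) :
    Bstar n1 (n2 - 1) ≡ B2negA m1 (n2 - 1) k1 k2 [ZMOD (p : ℤ) ^ N] := by
  rw [hBstar n1 n2 hodd hn2']
  rw [B_eq_C2 n1 (n2 - 1) k1 k2 (n1 + m1 + (n2 - 1)) (by omega),
    B_eq_C2 m1 (n2 - 1) k1 k2 (n1 + m1 + (n2 - 1)) (by omega)]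
  have hc := C2_cast hp hN hn1 hm1 h (n2 - 1) k1 k2 (n1 + m1 + (n2 - 1))
  have h2 := (ZMod.intCast_eq_intCast_iff _ _ _).mp hc
  simpa using h2
end
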